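/- Fix an integer m ≥ 1 and let Power(m) = (V, 2^V) be the power set hypergraph on V = {1, 2, …, m}, whose hyperedges are all nonempty subsets of V. Then the minimum weight of an edge-discriminator on Power(m) equals 2^m − 1: the labeling λ(i) = 2^{i−1} is an edge-discriminator of weight 2^m − 1, and every edge-discriminator on Power(m) has weight at least 2^m − 1. -/

import Mathlib

/-- `lam` is an edge-discriminator on the hypergraph with hyperedge family `E`
(vertices are natural numbers). -/
def IsEdgeDiscriminator (E : Finset (Finset ℕ)) (lam : ℕ → ℕ) : Prop :=
  (∀ e ∈ E, 0 < ∑ v ∈ e, lam v) ∧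
  (∀ e ∈ E, ∀ f ∈ E, e ≠ f → ∑ v ∈ e, lam v ≠ ∑ v ∈ f, lam v)

/-- The power set hypergraph on `{1, …, m}`: all nonempty subsets. -/
def powerEdges (m : ℕ) : Finset (Finset ℕ) :=
  (Finset.Icc 1 m).powerset.filter (fun e => e.Nonempty)

lemma mem_powerEdges {m : ℕ} {e : Finset ℕ} :
    e ∈ powerEdges m ↔ e ⊆ Finset.Icc 1 m ∧ e.Nonempty := by
  simp [powerEdges]

lemma sum_two_pow_inj {m : ℕ} {e f : Finset ℕ} (he : e ⊆ Finset.Icc 1 m)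
    (hf : f ⊆ Finset.Icc 1 m)
    (h : ∑ v ∈ e, 2 ^ (v - 1) = ∑ v ∈ f, 2 ^ (v - 1)) : e = f := by
  have hinj : ∀ (s : Finset ℕ), s ⊆ Finset.Icc 1 m →
      ∑ v ∈ s, 2 ^ (v - 1) = ∑ i ∈ s.image (· - 1), 2 ^ i := by
    intro s hs
    rw [Finset.sum_image]
    intro a ha b hb hab
    have ha1 : 1 ≤ a := (Finset.mem_Icc.mp (hs ha)).1
    have hb1 : 1 ≤ b := (Finset.mem_Icc.mp (hs hb)).1
    have hab' : a - 1 = b - 1 := hab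
    omega
  rw [hinj e he, hinj f hf] at h
  have himg : e.image (· - 1) = f.image (· - 1) := by
    have := congrArg (fun n => n.bitIndices.toFinset) h
    simpa using this
  ext x
  constructor
  · intro hx
    have hx1 : 1 ≤ x := (Finset.mem_Icc.mp (he hx)).1
    have : x - 1 ∈ f.image (· - 1) := himg ▸ Finset.mem_image_of_mem _ hx
    obtain ⟨y, hy, hxy⟩ := Finset.mem_image.mp this
    have hy1 : 1 ≤ y := (Finset.mem_Icc.mp (hf hy)).1
    have : y = x := by omega
    exact this ▸ hy
  · intro hx
    have hx1 : 1 ≤ x := (Finset.mem_Icc.mp (hf hx)).1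
    have : x - 1 ∈ e.image (· - 1) := himg ▸ Finset.mem_image_of_mem _ hx
    obtain ⟨y, hy, hxy⟩ := Finset.mem_image.mp this
    have hy1 : 1 ≤ y := (Finset.mem_Icc.mp (he hy)).1
    have : y = x := by omega
    exact this ▸ hy

theorem power_set_optimum (m : ℕ) (hm : 1 ≤ m) :
    (IsEdgeDiscriminator (powerEdges m) (fun i => 2 ^ (i - 1)) ∧
      ∑ v ∈ Finset.Icc 1 m, 2 ^ (v - 1) = 2 ^ m - 1) ∧
    (∀ lam : ℕ → ℕ, IsEdgeDiscriminator (powerEdges m) lam →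
      2 ^ m - 1 ≤ ∑ v ∈ Finset.Icc 1 m, lam v) := by
  have hcard : (powerEdges m).card = 2 ^ m - 1 := by
    have h1 : (Finset.Icc 1 m).card = m := by simp
    have : powerEdges m = (Finset.Icc 1 m).powerset.erase ∅ := by
      ext e
      simp [powerEdges, Finset.nonempty_iff_ne_empty, and_comm]
    rw [this, Finset.card_erase_of_mem (by simp), Finset.card_powerset, h1]
  have hsum : ∑ v ∈ Finset.Icc 1 m, 2 ^ (v - 1) = 2 ^ m - 1 := by
    clear hcard hm
    induction m with
    | zero => simp
    | succ n ih =>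
      rcases Nat.eq_zero_or_pos n with h | h
      · subst h; simp
      · rw [Finset.sum_Icc_succ_top (by omega), ih]
        have : 1 ≤ 2 ^ n := Nat.one_le_two_pow
        simp only [Nat.add_sub_cancel]
        rw [pow_succ]
        omega
  refine ⟨⟨⟨?_, ?_⟩, hsum⟩, ?_⟩
  · intro e he
    obtain ⟨hsub, ⟨x, hx⟩⟩ := mem_powerEdges.mp he
    exact Finset.sum_pos' (fun v _ => Nat.zero_le _)
      ⟨x, hx, Nat.pow_pos (by norm_num)⟩
  · intro e he f hf hef h
    exact hef (sum_two_pow_inj (mem_powerEdges.mp he).1 (mem_powerEdges.mp hf).1 h)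
  · intro lam ⟨hpos, hinj⟩
    set W := ∑ v ∈ Finset.Icc 1 m, lam v with hW
    have himg : (powerEdges m).image (fun e => ∑ v ∈ e, lam v) ⊆ Finset.Icc 1 W := by
      intro n hn
      obtain ⟨e, he, rfl⟩ := Finset.mem_image.mp hn
      refine Finset.mem_Icc.mpr ⟨hpos e he, ?_⟩
      exact Finset.sum_le_sum_of_subset (mem_powerEdges.mp he).1
    have hcard2 : ((powerEdges m).image (fun e => ∑ v ∈ e, lam v)).card
        = (powerEdges m).card := by
      apply Finset.card_image_of_injOn
      intro e he f hf h
      by_contra hne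
      exact hinj e he f hf hne h
    calc 2 ^ m - 1 = (powerEdges m).card := hcard.symm
      _ = ((powerEdges m).image (fun e => ∑ v ∈ e, lam v)).card := hcard2.symm
      _ ≤ (Finset.Icc 1 W).card := Finset.card_le_card himg
      _ = W := by simp
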